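/- For all integers b ≥ q ≥ 0, ∑_{r=q}^{b} h_{b−r}(α_0, α_1, …, α_r) · e_{r−q}(−α_0, −α_1, …, −α_{r−1}) equals 1 if q = b and equals 0 if q < b. (This family of identities is the coefficient-wise form, after expanding in powers of w and z, of the vacuum expectation value formula ⟨∅| ψ(z|α) ψ*(w|α) |∅⟩ = z/(z − w) for the deformed fermion fields, which is the key content of the deformed boson-fermion correspondence.) -/

import Mathlib

variable {R : Type*} [CommRing R]

/-- Elementary symmetric polynomial `e_m` of the entries of a list (zero for `m < 0`). -/
def esymL (l : List R) (m : ℤ) : R :=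
  if 0 ≤ m then
    ∑ s ∈ Finset.powersetCard m.toNat (Finset.univ : Finset (Fin l.length)), ∏ i ∈ s, l.get i
  else 0

/-- Complete homogeneous symmetric polynomial `h_m` of the entries of a list (zero for `m < 0`). -/
def hsymL (l : List R) (m : ℤ) : R :=
  if 0 ≤ m then
    ∑ s ∈ (Finset.univ : Finset (Fin l.length)).sym m.toNat, ((s.1).map l.get).prod
  else 0

/-- The list `f a, f (a+1), …, f b` (empty if `b < a`). -/
def intList (f : ℤ → R) (a b : ℤ) : List R :=
  (List.range (b + 1 - a).toNat).map (fun p => f (a + (p : ℤ)))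

/-- `e_m(f a, …, f b)`. -/
def eI (f : ℤ → R) (a b m : ℤ) : R := esymL (intList f a b) m

/-- `h_m(f a, …, f b)`. -/
def hI (f : ℤ → R) (a b m : ℤ) : R := hsymL (intList f a b) m



lemma esymm_cons (x : R) (s : Multiset R) (k : ℕ) :
    Multiset.esymm (x ::ₘ s) (k + 1) = Multiset.esymm s (k + 1) + x * Multiset.esymm s k := by
  simp only [Multiset.esymm, Multiset.powersetCard_cons, Multiset.map_add, Multiset.sum_add,
    Multiset.map_map, Function.comp, Multiset.prod_cons]
  rw [Multiset.sum_map_mul_left]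

lemma esymL_eq (l : List R) (m : ℤ) (hm : 0 ≤ m) :
    esymL l m = Multiset.esymm (↑l) m.toNat := by
  rw [esymL, if_pos hm]
  rw [show ((l : Multiset R)) = Finset.univ.val.map l.get by
    rw [Fin.univ_def]; show _ = ((List.finRange l.length).map l.get : Multiset R)
    rw [List.map_get_finRange]]
  rw [Finset.esymm_map_val]

lemma esymL_neg (l : List R) (m : ℤ) (hm : m < 0) : esymL l m = 0 := by
  rw [esymL, if_neg (by omega)]

lemma esymL_zero (l : List R) : esymL l 0 = 1 := by
  rw [esymL_eq l 0 le_rfl]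
  simp [Multiset.esymm]

lemma esymL_of_length_lt (l : List R) (m : ℤ) (hm : (l.length : ℤ) < m) : esymL l m = 0 := by
  rw [esymL_eq l m (by omega), Multiset.esymm, Multiset.powersetCard_eq_empty]
  · simp
  · simpa using by omega

lemma esymL_snoc (l : List R) (x : R) (m : ℤ) :
    esymL (l ++ [x]) m = esymL l m + x * esymL l (m - 1) := by
  rcases lt_trichotomy m 0 with h | h | h
  · rw [esymL_neg _ _ h, esymL_neg _ _ h, esymL_neg _ _ (by omega)]; ring
  · subst h; rw [esymL_zero, esymL_zero, esymL_neg _ _ (by omega)]; ring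
  · rw [esymL_eq _ _ (by omega), esymL_eq _ _ (by omega), esymL_eq _ _ (by omega)]
    have h1 : ((l ++ [x] : List R) : Multiset R) = x ::ₘ (↑l : Multiset R) := by
      rw [Multiset.cons_coe]
      exact Multiset.coe_eq_coe.mpr (List.perm_append_singleton x l)
    obtain ⟨k, hk⟩ : ∃ k : ℕ, m.toNat = k + 1 := ⟨(m - 1).toNat, by omega⟩
    rw [h1, hk, esymm_cons, show (m-1).toNat = k by omega]


def hF {n : ℕ} (f : Fin n → R) (m : ℕ) : R := ∑ s : Sym (Fin n) m, ((s.1).map f).prod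

lemma hsymL_eq (l : List R) (m : ℤ) (hm : 0 ≤ m) : hsymL l m = hF l.get m.toNat := by
  rw [hsymL, if_pos hm, hF, Finset.sym_univ]

lemma hF_zero {n : ℕ} (f : Fin n → R) : hF f 0 = 1 := by
  simp only [hF]
  rw [Fintype.sum_unique]
  show (Multiset.map f (0 : Multiset (Fin n))).prod = 1
  simp

lemma hF_of_isEmpty (f : Fin 0 → R) (m : ℕ) : hF f (m + 1) = 0 := by
  haveI : IsEmpty (Sym (Fin 0) (m + 1)) := by
    constructor
    intro s
    obtain ⟨a, _⟩ := Multiset.exists_mem_of_ne_zero (s := s.1)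
      (by intro h; have := s.2; rw [h] at this; simp at this)
    exact a.elim0
  simp [hF]

lemma hF_relabel {n n' : ℕ} (e : Fin n ≃ Fin n') (f : Fin n' → R) (m : ℕ) :
    hF (f ∘ e) m = hF f m := by
  refine Fintype.sum_equiv (Sym.equivCongr e) _ _ fun s => ?_
  simp [Sym.equivCongr, Multiset.map_map]

lemma hF_one (f : Fin 1 → R) (m : ℕ) : hF f m = f 0 ^ m := by
  rw [hF]
  have h1 : ∀ s : Sym (Fin 1) m, ((s.1).map f).prod = f 0 ^ m := by
    intro s
    have : (s.1).map f = Multiset.replicate m (f 0) := by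
      rw [Multiset.eq_replicate]
      constructor
      · rw [Multiset.card_map]; exact s.2
      · rintro b hb
        obtain ⟨a, _, rfl⟩ := Multiset.mem_map.mp hb
        congr
        exact Subsingleton.elim a 0
    rw [this, Multiset.prod_replicate]
  rw [Finset.sum_congr rfl fun s _ => h1 s, Finset.sum_const, Finset.card_univ,
    Sym.card_sym_eq_multichoose, Fintype.card_fin, Nat.multichoose_one, one_smul]

lemma hF_succ {n : ℕ} (f : Fin (n + 1) → R) (m : ℕ) :
    hF f (m + 1) = hF (f ∘ Fin.succ) (m + 1) + f 0 * hF f m := by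
  cases n with
  | zero =>
    rw [hF_of_isEmpty, hF_one, hF_one, zero_add, pow_succ, mul_comm]
  | succ n =>
    have hsplit : hF f (m + 1) =
        (∑ s : { s : Sym (Fin (n + 2)) (m + 1) // (0 : Fin (n+2)) ∈ s }, ((s.1.1).map f).prod)
        + ∑ s : { s : Sym (Fin (n + 2)) (m + 1) // ¬ (0 : Fin (n+2)) ∈ s }, ((s.1.1).map f).prod := by
      rw [hF,
        ← Fintype.sum_equiv (Equiv.sumCompl (fun s : Sym (Fin (n + 2)) (m + 1) => (0 : Fin (n+2)) ∈ s))
          (fun z => ((((Equiv.sumCompl _) z) : Sym (Fin (n+2)) (m+1)).1.map f).prod)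
          (fun s => ((s.1).map f).prod) (fun z => rfl),
        Fintype.sum_sum_type]
      rfl
    have h1 : (∑ s : { s : Sym (Fin (n + 2)) (m + 1) // (0 : Fin (n+2)) ∈ s },
        ((s.1.1).map f).prod) = f 0 * hF f m := by
      rw [hF, Finset.mul_sum]
      refine Fintype.sum_equiv Sym.e1 _ _ fun s => ?_
      show (Multiset.map f s.1.1).prod = f 0 * (Multiset.map f ((Sym.e1 s) : Sym _ m).1).prod
      have hm0 : (0 : Fin (n+2)) ∈ (s.1.1 : Multiset _) := s.2
      rw [show ((Sym.e1 s) : Sym _ m).1 = (s.1.1.erase 0) from rfl,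
        Multiset.prod_map_erase (f := f) hm0]
    have h2 : (∑ s : { s : Sym (Fin (n + 2)) (m + 1) // ¬ (0 : Fin (n+2)) ∈ s },
        ((s.1.1).map f).prod) = hF (f ∘ Fin.succ) (m + 1) := by
      rw [hF]
      refine Fintype.sum_equiv Sym.e2 _ _ fun s => ?_
      show (Multiset.map f s.1.1).prod = (Multiset.map (f ∘ Fin.succ) (Multiset.map (Fin.predAbove 0) s.1.1)).prod
      rw [Multiset.map_map]
      refine congrArg _ (Multiset.map_congr rfl fun v hv => ?_)
      show f v = f (Fin.succ ((0 : Fin (n+1)).predAbove v))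
      rw [← Fin.zero_succAbove]
      have h' : ((0 : Fin (n+1)).castSucc).succAbove (Fin.predAbove 0 v) = v :=
        Fin.succAbove_predAbove (by rw [Fin.castSucc_zero]; exact ne_of_mem_of_not_mem hv s.2)
      exact (congrArg f h').symm
    rw [hsplit, h1, h2, add_comm]

lemma hsymL_neg (l : List R) (m : ℤ) (hm : m < 0) : hsymL l m = 0 := by
  rw [hsymL, if_neg (by omega)]

lemma hsymL_zero (l : List R) : hsymL l 0 = 1 := by
  rw [hsymL_eq l 0 le_rfl]; exact hF_zero _

lemma hsymL_nil (m : ℤ) (hm : m ≠ 0) : hsymL ([] : List R) m = 0 := by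
  rcases lt_or_gt_of_ne hm with h | h
  · exact hsymL_neg _ _ h
  · rw [hsymL_eq _ _ (by omega)]
    obtain ⟨k, hk⟩ : ∃ k : ℕ, m.toNat = k + 1 := ⟨(m - 1).toNat, by omega⟩
    rw [hk]
    exact hF_of_isEmpty _ _

lemma hsymL_cons (x : R) (l : List R) (m : ℤ) :
    hsymL (x :: l) m = hsymL l m + x * hsymL (x :: l) (m - 1) := by
  rcases lt_trichotomy m 0 with h | h | h
  · rw [hsymL_neg _ _ h, hsymL_neg _ _ h, hsymL_neg _ _ (by omega)]; ring
  · subst h; rw [hsymL_zero, hsymL_zero, hsymL_neg _ _ (by omega)]; ring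
  · obtain ⟨k, hk⟩ : ∃ k : ℕ, m.toNat = k + 1 := ⟨(m - 1).toNat, by omega⟩
    rw [hsymL_eq _ _ (by omega), hsymL_eq _ _ (by omega), hsymL_eq _ _ (by omega), hk,
      show (m - 1).toNat = k by omega]
    have hc : (x :: l).get = Fin.cons x l.get := by
      funext i
      refine Fin.cases ?_ (fun j => ?_) i <;> simp
    have hs : ((x :: l).get ∘ Fin.succ) = l.get := by
      funext i; simp [hc]
    have := hF_succ (x :: l).get k
    rw [hs] at this
    have h0 : (x :: l).get (0 : Fin (l.length + 1)) = x := by simp [hc]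
    rw [h0] at this
    exact this

lemma hsymL_snoc_eq_cons (l : List R) (x : R) (m : ℤ) :
    hsymL (l ++ [x]) m = hsymL (x :: l) m := by
  rcases le_or_gt 0 m with h | h
  · rw [hsymL_eq _ _ h, hsymL_eq _ _ h]
    have hlen : (l ++ [x]).length = l.length + 1 := by simp
    have e : Fin (l ++ [x]).length ≃ Fin ((x :: l).length) :=
      (finCongr hlen).trans (finRotate (l.length + 1))
    have hget : (l ++ [x]).get = (x :: l).get ∘ ((finCongr hlen).trans (finRotate (l.length + 1))) := by
      funext i
      simp only [Function.comp_apply, Equiv.trans_apply, finCongr_apply]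
      have hi2 : (i : ℕ) < l.length + 1 := by have := i.2; omega
      rcases lt_or_eq_of_le (Nat.lt_succ_iff.mp hi2) with hi | hi
      · have hlt : (Fin.cast hlen i) < Fin.last l.length := by
          rw [Fin.lt_iff_val_lt_val]; simpa using hi
        have h1 : finRotate (l.length + 1) (Fin.cast hlen i) = ⟨(i : ℕ) + 1, by omega⟩ := by
          rw [finRotate_succ_apply]
          apply Fin.ext
          rw [Fin.val_add_one_of_lt hlt]
          rfl
        rw [h1]
        show (l ++ [x]).get i = l.get ⟨(i : ℕ), hi⟩
        rw [List.get_eq_getElem, List.get_eq_getElem, List.getElem_append_left]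
      · have h1 : finRotate (l.length + 1) (Fin.cast hlen i) = 0 := by
          have : Fin.cast hlen i = Fin.last l.length := Fin.ext (by simpa using hi)
          rw [this, finRotate_succ_apply, Fin.last_add_one]
        rw [h1]
        show (l ++ [x]).get i = x
        rw [List.get_eq_getElem]
        have : (i : ℕ) = l.length := hi
        simp [this]
    rw [hget]
    exact hF_relabel ((finCongr hlen).trans (finRotate (l.length + 1))) (x :: l).get m.toNat
  · rw [hsymL_neg _ _ h, hsymL_neg _ _ h]

lemma hsymL_snoc (l : List R) (x : R) (m : ℤ) :
    hsymL (l ++ [x]) m = hsymL l m + x * hsymL (l ++ [x]) (m - 1) := by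
  rw [hsymL_snoc_eq_cons, hsymL_snoc_eq_cons, hsymL_cons]
section
variable {R : Type*} [CommRing R]
variable (esymL : List R → ℤ → R) (hsymL : List R → ℤ → R)
variable (esymL_neg : ∀ (l : List R) (m : ℤ), m < 0 → esymL l m = 0)
variable (esymL_zero : ∀ l : List R, esymL l 0 = 1)
variable (esymL_of_length_lt : ∀ (l : List R) (m : ℤ), (l.length : ℤ) < m → esymL l m = 0)
variable (esymL_snoc : ∀ (l : List R) (x : R) (m : ℤ),
    esymL (l ++ [x]) m = esymL l m + x * esymL l (m - 1))
variable (hsymL_neg : ∀ (l : List R) (m : ℤ), m < 0 → hsymL l m = 0)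
variable (hsymL_zero : ∀ l : List R, hsymL l 0 = 1)
variable (hsymL_nil : ∀ m : ℤ, m ≠ 0 → hsymL ([] : List R) m = 0)
variable (hsymL_snoc : ∀ (l : List R) (x : R) (m : ℤ),
    hsymL (l ++ [x]) m = hsymL l m + x * hsymL (l ++ [x]) (m - 1))

def pconv (l : List R) (n : ℤ) (N : ℕ) : R :=
  ∑ j ∈ Finset.range (N + 1), hsymL l (n - j) * esymL (l.map Neg.neg) j

include esymL_neg esymL_snoc hsymL_snoc in
lemma pconv_succ (l : List R) (x : R) (n : ℤ) (N : ℕ) :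
    pconv esymL hsymL (l ++ [x]) n (N + 1) =
      pconv esymL hsymL l n N
        + hsymL (l ++ [x]) (n - (N + 1)) * esymL (l.map Neg.neg) (N + 1) := by
  have hmap : (l ++ [x]).map Neg.neg = l.map Neg.neg ++ [-x] := by simp
  have expand : ∀ j ∈ Finset.range (N + 2),
      hsymL (l ++ [x]) (n - j) * esymL ((l ++ [x]).map Neg.neg) j
        = hsymL (l ++ [x]) (n - j) * esymL (l.map Neg.neg) j
          - x * (hsymL (l ++ [x]) (n - j) * esymL (l.map Neg.neg) ((j : ℤ) - 1)) := by
    intro j _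
    rw [hmap, esymL_snoc]
    ring
  rw [pconv, Finset.sum_congr rfl expand, Finset.sum_sub_distrib, ← Finset.mul_sum]
  rw [Finset.sum_range_succ (fun j : ℕ => hsymL (l ++ [x]) (n - j) * esymL (l.map Neg.neg) j) (N + 1)]
  rw [Finset.sum_range_succ' (fun j : ℕ => hsymL (l ++ [x]) (n - j) * esymL (l.map Neg.neg) ((j : ℤ) - 1)) (N + 1)]
  have h0 : hsymL (l ++ [x]) (n - (0 : ℕ)) * esymL (l.map Neg.neg) (((0 : ℕ) : ℤ) - 1) = 0 := by
    rw [esymL_neg _ _ (by norm_num)]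
    ring
  rw [h0, add_zero]
  have hcomb : (∑ j ∈ Finset.range (N + 1), hsymL (l ++ [x]) (n - j) * esymL (l.map Neg.neg) j)
      - x * ∑ i ∈ Finset.range (N + 1),
          hsymL (l ++ [x]) (n - ((i : ℕ) + 1 : ℕ)) * esymL (l.map Neg.neg) (((i + 1 : ℕ) : ℤ) - 1)
      = pconv esymL hsymL l n N := by
    rw [Finset.mul_sum, ← Finset.sum_sub_distrib, pconv]
    refine Finset.sum_congr rfl fun j _ => ?_
    have hc1 : (((j + 1 : ℕ) : ℤ) - 1) = (j : ℤ) := by push_cast; ring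
    have hc2 : (n - ((j : ℕ) + 1 : ℕ) : ℤ) = n - j - 1 := by push_cast; ring
    rw [hc1, hc2]
    have := hsymL_snoc l x (n - j)
    rw [this]
    ring
  rw [← hcomb]
  push_cast
  ring

include hsymL_neg in
lemma pconv_extend (l : List R) (n : ℤ) (N M : ℕ) (hNM : N ≤ M) (hn : n ≤ N) :
    pconv esymL hsymL l n M = pconv esymL hsymL l n N := by
  rw [pconv, pconv]
  refine (Finset.sum_subset (by intro j hj; simp at hj ⊢; omega) fun j hj hj' => ?_).symm
  simp only [Finset.mem_range] at hj hj'
  rw [hsymL_neg _ _ (by omega : n - (j : ℤ) < 0)]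
  ring

include esymL_neg esymL_zero esymL_of_length_lt esymL_snoc hsymL_zero hsymL_nil hsymL_snoc in
lemma conv_eq (l : List R) (n : ℤ) :
    pconv esymL hsymL l n l.length = if n = 0 then 1 else 0 := by
  induction l using List.reverseRecOn generalizing n with
  | nil =>
    rw [pconv]
    simp only [List.length_nil, zero_add, Finset.range_one, Finset.sum_singleton, List.map_nil,
      Nat.cast_zero, sub_zero]
    rw [esymL_zero, mul_one]
    split_ifs with h
    · rw [h, hsymL_zero]
    · exact hsymL_nil n h
  | append_singleton l x IH =>
    rw [show (l ++ [x]).length = l.length + 1 from by simp,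
      pconv_succ esymL hsymL esymL_neg esymL_snoc hsymL_snoc,
      esymL_of_length_lt _ _ (by simp), mul_zero, add_zero, IH]
end

lemma intList_eq (f : ℤ → R) (a b : ℤ) :
    intList f a b = (List.range (b + 1 - a).toNat).map (fun p : ℕ => f (a + (p : ℤ))) := by
  unfold intList
  rw [show (do let x ← List.range (b + 1 - a).toNat; pure ((x : ℤ)) : List ℤ)
      = (List.range (b + 1 - a).toNat).map (fun x : ℕ => (x : ℤ)) from
    List.flatMap_pure_eq_map _ _, List.map_map]
  rfl

lemma intList_length (f : ℤ → R) (k : ℤ) : (intList f 0 k).length = (k + 1).toNat := by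
  rw [intList_eq]
  simp

lemma intList_neg (α : ℤ → R) (a : ℤ) :
    intList (fun t => -α t) 0 a = (intList α 0 a).map Neg.neg := by
  rw [intList_eq, intList_eq, List.map_map]
  rfl

lemma intList_snoc (f : ℤ → R) (k : ℤ) (hk : 0 ≤ k) :
    intList f 0 (k + 1) = intList f 0 k ++ [f (k + 1)] := by
  rw [intList_eq, intList_eq, show (k + 1 + 1 - 0).toNat = (k + 1 - 0).toNat + 1 by omega,
    List.range_succ, List.map_append]
  congr 1
  simp only [List.map_cons, List.map_nil, List.cons.injEq, and_true]
  congr 1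
  omega

/-- Coefficient-wise form of ⟨∅|ψ(z|α)ψ*(w|α)|∅⟩ = z/(z−w): for b ≥ q ≥ 0,
∑_{r=q}^{b} h_{b−r}(α_0,…,α_r) e_{r−q}(−α_0,…,−α_{r−1}) = δ_{qb}. -/
theorem vacuum_expectation_coeff (α : ℤ → R) (q b : ℤ) (hq : 0 ≤ q) (hb : q ≤ b) :
    (∑ r ∈ Finset.Icc q b,
      hI α 0 r (b - r) * eI (fun t => -α t) 0 (r - 1) (r - q))
      = if q = b then 1 else 0 := by
  have key : ∀ k : ℤ, q ≤ k →
      (∑ r ∈ Finset.Icc q k, hI α 0 r (b - r) * eI (fun t => -α t) 0 (r - 1) (r - q))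
        = pconv esymL hsymL (intList α 0 k) (b - q) ((k - q).toNat) := by
    refine Int.le_induction ?_ ?_
    · rw [Finset.Icc_self, Finset.sum_singleton, pconv, show (q - q).toNat = 0 by omega]
      simp only [zero_add, Finset.sum_range_one, Nat.cast_zero, sub_zero]
      rw [hI, eI, show q - q = 0 by ring, esymL_zero, esymL_zero, mul_one]
    · intro k hk IH
      have hins : Finset.Icc q (k + 1) = insert (k + 1) (Finset.Icc q k) :=
        Finset.ext fun z => by simp only [Finset.mem_Icc, Finset.mem_insert]; omega
      rw [hins, Finset.sum_insert (by simp only [Finset.mem_Icc]; omega), IH,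
        show (k + 1 - q).toNat = (k - q).toNat + 1 by omega,
        intList_snoc α k (by omega),
        pconv_succ esymL hsymL esymL_neg esymL_snoc hsymL_snoc]
      rw [hI, eI, show k + 1 - 1 = k by ring, intList_neg]
      rw [show (b - q - (((k - q).toNat : ℤ) + 1)) = b - (k + 1) by omega,
        show ((k - q).toNat : ℤ) + 1 = k + 1 - q by omega]
      rw [intList_snoc α k (by omega)]
      ring
  rw [key b hb,
    ← pconv_extend esymL hsymL hsymL_neg (intList α 0 b) (b - q) ((b - q).toNat)
      ((intList α 0 b).length) (by rw [intList_length]; omega) (by omega),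
    conv_eq esymL hsymL esymL_neg esymL_zero esymL_of_length_lt esymL_snoc hsymL_zero
      hsymL_nil hsymL_snoc]
  split_ifs with h1 h2 h2 <;> first | rfl | omega
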